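/- Let T be a (d₁,d₂)-biregular tree with d₁,d₂ ≥ 3 and Γ ≤ Aut(T) a tree lattice. Then the associated Markov chain (Mₙ) on EQ is positive recurrent, i.e. it admits a stationary probability measure. -/

import Mathlib

open Filter Topology MeasureTheory

attribute [local instance] Classical.propDecidable

namespace TreeDyn


variable {V : Type*}

/-- The type of directed edges of a simple graph. -/
def DEdge (T : SimpleGraph V) : Type _ := {p : V × V // T.Adj p.1 p.2}

/-- `T` is a `(d₁,d₂)`-biregular tree: a tree whose vertex set admits a bipartition such
that every vertex of one class has degree `d₁` and every vertex of the other class has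
degree `d₂`. -/
def IsBiregularTree (T : SimpleGraph V) (d₁ d₂ : ℕ) : Prop :=
  T.Connected ∧ T.IsAcyclic ∧
    ∃ c : V → Bool,
      (∀ u v, T.Adj u v → c u ≠ c v) ∧
      (∀ v, c v = true → Nat.card (T.neighborSet v) = d₁) ∧
      (∀ v, c v = false → Nat.card (T.neighborSet v) = d₂)

/-- A permutation of the vertices is an automorphism of `T` acting without edge
inversion if it preserves adjacency and moves every vertex an even distance. -/
def IsTreeAut (T : SimpleGraph V) (σ : Equiv.Perm V) : Prop :=
  (∀ u v, T.Adj (σ u) (σ v) ↔ T.Adj u v) ∧ ∀ v, Even (T.dist v (σ v))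

variable (T : SimpleGraph V) (Λ : Subgroup (Equiv.Perm V))

/-- Two vertices are related if they lie in the same `Λ`-orbit. -/
def vrel (u v : V) : Prop := ∃ γ ∈ Λ, γ u = v

/-- The vertex set of the quotient graph `Q = Λ∖T`. -/
def VQ := Quot (vrel Λ)

/-- Projection of vertices to the quotient graph. -/
def πV : V → VQ Λ := Quot.mk _

/-- Two directed edges are related if they lie in the same `Λ`-orbit. -/
def erel (e f : DEdge T) : Prop :=
  ∃ γ ∈ Λ, γ e.1.1 = f.1.1 ∧ γ e.1.2 = f.1.2

/-- The directed edge set of the quotient graph `Q = Λ∖T`. -/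
def EQ := Quot (erel T Λ)

/-- Projection of directed edges to the quotient graph. -/
def πE : DEdge T → EQ T Λ := Quot.mk _

/-- The initial vertex `∂₀ e` of a quotient edge. -/
noncomputable def tailQ (e : EQ T Λ) : VQ Λ := πV Λ (Quot.out e).1.1

/-- The terminal vertex `∂₁ e` of a quotient edge. -/
noncomputable def headQ (e : EQ T Λ) : VQ Λ := πV Λ (Quot.out e).1.2

/-- The reversal `ē` of a quotient edge. -/
noncomputable def barQ (e : EQ T Λ) : EQ T Λ :=
  πE T Λ ⟨((Quot.out e).1.2, (Quot.out e).1.1), (Quot.out e).2.symm⟩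

/-- The order of the stabilizer of a vertex in `Λ`. -/
noncomputable def stabV (v : V) : ℕ :=
  Nat.card {γ : Λ // (γ : Equiv.Perm V) v = v}

/-- The order of the pointwise stabilizer of a directed edge in `Λ`. -/
noncomputable def stabE (e : DEdge T) : ℕ :=
  Nat.card {γ : Λ // (γ : Equiv.Perm V) e.1.1 = e.1.1 ∧ (γ : Equiv.Perm V) e.1.2 = e.1.2}

/-- The index map of the edge-indexed graph: `ind e = [Λ_{∂₀ẽ} : Λ_ẽ]` for any lift `ẽ`. -/
noncomputable def indQ (e : EQ T Λ) : ℕ :=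
  stabV Λ (Quot.out e).1.1 / stabE T Λ (Quot.out e)

/-- The degree of a vertex of the quotient graph: the degree in `T` of any of its lifts. -/
noncomputable def degQ (v : VQ Λ) : ℕ := Nat.card (T.neighborSet (Quot.out v))

/-- `Δ(e) = ind(ē)/ind(e)`. -/
noncomputable def deltaQ (e : EQ T Λ) : ℝ :=
  (indQ T Λ (barQ T Λ e) : ℝ) / (indQ T Λ e : ℝ)

/-- `Λ` is a tree lattice: a discrete subgroup (finite vertex stabilizers) of `Aut T`
with finite covolume, i.e. `Σ_{v ∈ VQ} N_o(v)⁻¹ < ∞` where `N_o` is the multiplicative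
function along paths determined by `Δ`. -/
def IsTreeLattice : Prop :=
  (∀ γ ∈ Λ, IsTreeAut T γ) ∧
  (∀ v : V, Finite {γ : Λ // (γ : Equiv.Perm V) v = v}) ∧
  ∃ (o : VQ Λ) (N : VQ Λ → ℝ),
    N o = 1 ∧ (∀ v, 0 < N v) ∧
    (∀ e : EQ T Λ, N (headQ T Λ e) = deltaQ T Λ e * N (tailQ T Λ e)) ∧
    Summable (fun v : VQ Λ => (N v)⁻¹)

/-- The transition kernel of the Markov chain associated to `Λ` on the directed edges
of the quotient graph. -/
noncomputable def kerP (e f : EQ T Λ) : ℝ :=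
  if headQ T Λ e = tailQ T Λ f then
    (if f = barQ T Λ e then ((indQ T Λ f : ℝ) - 1) else (indQ T Λ f : ℝ)) /
      ((degQ T Λ (headQ T Λ e) : ℝ) - 1)
  else 0

/-- The `n`-step transition kernel. -/
noncomputable def kerPn : ℕ → EQ T Λ → EQ T Λ → ℝ
  | 0, e, f => if e = f then 1 else 0
  | n + 1, e, f => ∑' g : EQ T Λ, kerPn n e g * kerP T Λ g f

/-- Adjacency in the quotient graph. -/
def AdjQ (u v : VQ Λ) : Prop :=
  ∃ e : EQ T Λ, tailQ T Λ e = u ∧ headQ T Λ e = v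

/-- Graph distance on the quotient graph. -/
noncomputable def distQ (u v : VQ Λ) : ℕ :=
  sInf {n : ℕ | ∃ f : ℕ → VQ Λ, f 0 = u ∧ f n = v ∧ ∀ i < n, AdjQ T Λ (f i) (f (i + 1))}

/-- Distance from a finite set of vertices of the quotient graph. -/
noncomputable def distToF (F : Finset (VQ Λ)) (v : VQ Λ) : ℕ :=
  sInf {n : ℕ | ∃ u ∈ F, distQ T Λ u v = n}

/-- `F` is a finite part for `Λ`: the complement of `F` in the quotient graph is a
disjoint union of finitely many open Nagao rays. -/
def IsFinitePart (F : Finset (VQ Λ)) : Prop :=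
  ∃ (k : ℕ) (ray : Fin k → ℕ → VQ Λ),
    (∀ v : VQ Λ, v ∉ F ↔ ∃ i n, ray i n = v) ∧
    (∀ i n j m, ray i n = ray j m → i = j ∧ n = m) ∧
    (∀ i n, ∃ e : EQ T Λ, tailQ T Λ e = ray i n ∧ headQ T Λ e = ray i (n + 1)) ∧
    (∀ i n, ∀ e f : EQ T Λ, tailQ T Λ e = ray i n → headQ T Λ e = ray i (n + 1) →
      tailQ T Λ f = ray i n → headQ T Λ f = ray i (n + 1) → e = f) ∧
    (∀ i n, ∀ e : EQ T Λ, tailQ T Λ e = ray i n → headQ T Λ e ∉ F →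
      headQ T Λ e = ray i (n + 1) ∨ ∃ m, n = m + 1 ∧ headQ T Λ e = ray i m) ∧
    (∀ i n, ∀ e : EQ T Λ, tailQ T Λ e = ray i n → headQ T Λ e = ray i (n + 1) →
      indQ T Λ e = 1) ∧
    (∀ i n, ∀ e : EQ T Λ, tailQ T Λ e = ray i (n + 1) → headQ T Λ e = ray i n →
      indQ T Λ e = degQ T Λ (ray i n) - 1)

/-- A tree lattice is geometrically finite if its quotient graph contains a nonempty
finite subgraph whose complement is a disjoint union of finitely many open Nagao rays. -/
def IsGeomFinite : Prop := ∃ F : Finset (VQ Λ), F.Nonempty ∧ IsFinitePart T Λ F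

/-- The mass that the projection to `VQ` of the uniform measure on the sphere
`S(vb,n)` gives to the vertex `q` of the quotient graph. -/
noncomputable def sphPush (vb : V) (n : ℕ) (q : VQ Λ) : ℝ :=
  (Nat.card {w : V // T.dist vb w = n ∧ πV Λ w = q} : ℝ) /
    (Nat.card {w : V // T.dist vb w = n} : ℝ)

/-- `ℙ_e(τ = i)` : the probability that the Markov chain started at `e` hits the set of
edges with terminal vertex in `F` for the first time at time `i`. -/
noncomputable def hitP (F : Finset (VQ Λ)) : ℕ → EQ T Λ → ℝ
  | 0, e => if headQ T Λ e ∈ F then 1 else 0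
  | i + 1, e => if headQ T Λ e ∈ F then 0 else ∑' f : EQ T Λ, kerP T Λ e f * hitP F i f

/-- `ℙ_e(τ' = i)` where `τ' = min {n | n ≥ τ, 2 ∣ n}`. -/
noncomputable def hitP' (F : Finset (VQ Λ)) (i : ℕ) (e : EQ T Λ) : ℝ :=
  if 2 ∣ i then hitP T Λ F i e + (if 1 ≤ i then hitP T Λ F (i - 1) e else 0) else 0

/-- `(Ω₀, Ω₁)` is the pair of cyclic classes of the (period two) kernel `P`. -/
def IsCyclicPair (Ω₀ Ω₁ : Set (EQ T Λ)) : Prop :=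
  (∀ e, e ∈ Ω₀ ∨ e ∈ Ω₁) ∧ (∀ e, ¬(e ∈ Ω₀ ∧ e ∈ Ω₁)) ∧
  (∀ e ∈ Ω₀, ∀ f, kerP T Λ e f ≠ 0 → f ∈ Ω₁) ∧
  (∀ e ∈ Ω₁, ∀ f, kerP T Λ e f ≠ 0 → f ∈ Ω₀)

/-- `Ω` is a cyclic class of the kernel `P`. -/
def IsCyclicClass (Ω : Set (EQ T Λ)) : Prop :=
  ∃ Ω', IsCyclicPair T Λ Ω Ω' ∨ IsCyclicPair T Λ Ω' Ω


section Aux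

variable (T : SimpleGraph V) (Λ : Subgroup (Equiv.Perm V))

lemma vrel_equiv : Equivalence (vrel Λ) := by
  constructor
  · exact fun u => ⟨1, Λ.one_mem, rfl⟩
  · rintro u v ⟨γ, hγ, rfl⟩
    exact ⟨γ⁻¹, Λ.inv_mem hγ, by simp⟩
  · rintro u v w ⟨γ, hγ, rfl⟩ ⟨δ, hδ, rfl⟩
    exact ⟨δ * γ, Λ.mul_mem hδ hγ, by simp⟩

lemma erel_equiv : Equivalence (erel T Λ) := by
  constructor
  · exact fun d => ⟨1, Λ.one_mem, rfl, rfl⟩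
  · rintro d d' ⟨γ, hγ, h1, h2⟩
    exact ⟨γ⁻¹, Λ.inv_mem hγ, by simp [← h1], by simp [← h2]⟩
  · rintro d d' d'' ⟨γ, hγ, h1, h2⟩ ⟨δ, hδ, h1', h2'⟩
    exact ⟨δ * γ, Λ.mul_mem hδ hγ, by simp [h1, h1'], by simp [h2, h2']⟩

lemma piV_eq_iff {u v : V} : πV Λ u = πV Λ v ↔ vrel Λ u v := by
  refine (Quot.eq (r := vrel Λ)).trans ?_
  exact (vrel_equiv Λ).eqvGen_iff

lemma piE_eq_iff {d d' : DEdge T} : πE T Λ d = πE T Λ d' ↔ erel T Λ d d' := by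
  refine (Quot.eq (r := erel T Λ)).trans ?_
  exact (erel_equiv T Λ).eqvGen_iff

lemma piE_out (e : EQ T Λ) : πE T Λ (Quot.out e) = e := Quot.out_eq e

lemma piV_out (v : VQ Λ) : πV Λ (Quot.out v) = v := Quot.out_eq v

/-- The reversal of a directed edge of `T`. -/
def revD (d : DEdge T) : DEdge T := ⟨(d.1.2, d.1.1), d.2.symm⟩

lemma erel_revD {d d' : DEdge T} (h : erel T Λ d d') : erel T Λ (revD T d) (revD T d') := by
  obtain ⟨γ, hγ, h1, h2⟩ := h
  exact ⟨γ, hγ, h2, h1⟩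

lemma tailQ_mk (d : DEdge T) : tailQ T Λ (πE T Λ d) = πV Λ d.1.1 := by
  have h : erel T Λ (Quot.out (πE T Λ d)) d := (piE_eq_iff T Λ).1 (piE_out T Λ _)
  obtain ⟨γ, hγ, h1, h2⟩ := h
  exact (piV_eq_iff Λ).2 ⟨γ, hγ, h1⟩

lemma headQ_mk (d : DEdge T) : headQ T Λ (πE T Λ d) = πV Λ d.1.2 := by
  have h : erel T Λ (Quot.out (πE T Λ d)) d := (piE_eq_iff T Λ).1 (piE_out T Λ _)
  obtain ⟨γ, hγ, h1, h2⟩ := h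
  exact (piV_eq_iff Λ).2 ⟨γ, hγ, h2⟩

lemma barQ_mk (d : DEdge T) : barQ T Λ (πE T Λ d) = πE T Λ (revD T d) := by
  have h : erel T Λ (Quot.out (πE T Λ d)) d := (piE_eq_iff T Λ).1 (piE_out T Λ _)
  exact (piE_eq_iff T Λ).2 (erel_revD T Λ h)

lemma barQ_eq_out (e : EQ T Λ) : barQ T Λ e = πE T Λ (revD T (Quot.out e)) := by
  conv_lhs => rw [← piE_out T Λ e]
  exact barQ_mk T Λ _

lemma revD_revD (d : DEdge T) : revD T (revD T d) = d := rfl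

lemma barQ_barQ (e : EQ T Λ) : barQ T Λ (barQ T Λ e) = e := by
  rw [barQ_eq_out T Λ e, barQ_mk, revD_revD, piE_out]

lemma tailQ_barQ (e : EQ T Λ) : tailQ T Λ (barQ T Λ e) = headQ T Λ e := by
  rw [barQ_eq_out, tailQ_mk]
  rfl

lemma headQ_barQ (e : EQ T Λ) : headQ T Λ (barQ T Λ e) = tailQ T Λ e := by
  rw [barQ_eq_out, headQ_mk]
  rfl

end Aux
section Aux2

variable (T : SimpleGraph V) (Λ : Subgroup (Equiv.Perm V))

lemma stabV_eq_of_vrel {u v : V} (h : vrel Λ u v) : stabV Λ u = stabV Λ v := by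
  obtain ⟨γ, hγ, rfl⟩ := h
  refine Nat.card_congr ⟨fun δ => ⟨⟨γ, hγ⟩ * δ.1 * ⟨γ, hγ⟩⁻¹, ?_⟩,
    fun δ => ⟨⟨γ, hγ⟩⁻¹ * δ.1 * ⟨γ, hγ⟩, ?_⟩, fun δ => Subtype.ext (by group), fun δ => Subtype.ext (by group)⟩
  · have h2 := δ.2
    simp [Equiv.Perm.mul_apply, h2]
  · have h2 := δ.2
    simp [Equiv.Perm.mul_apply] at h2 ⊢
    have := congrArg γ.symm h2
    simpa using this

lemma stabE_eq_of_erel {d d' : DEdge T} (h : erel T Λ d d') : stabE T Λ d = stabE T Λ d' := by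
  obtain ⟨γ, hγ, h1, h2⟩ := h
  refine Nat.card_congr ⟨fun δ => ⟨⟨γ, hγ⟩ * δ.1 * ⟨γ, hγ⟩⁻¹, ?_, ?_⟩,
    fun δ => ⟨⟨γ, hγ⟩⁻¹ * δ.1 * ⟨γ, hγ⟩, ?_, ?_⟩, fun δ => Subtype.ext (by group), fun δ => Subtype.ext (by group)⟩
  · have h2' := δ.2.1
    simp [Equiv.Perm.mul_apply, ← h1, h2']
  · have h2' := δ.2.2
    simp [Equiv.Perm.mul_apply, ← h2, h2']
  · have h2' : (δ.1 : Equiv.Perm V) (γ (d.1.1)) = γ (d.1.1) := by rw [h1]; exact δ.2.1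
    simp [Equiv.Perm.mul_apply, h2']
  · have h2' : (δ.1 : Equiv.Perm V) (γ (d.1.2)) = γ (d.1.2) := by rw [h2]; exact δ.2.2
    simp [Equiv.Perm.mul_apply, h2']

lemma indQ_mk (d : DEdge T) : indQ T Λ (πE T Λ d) = stabV Λ d.1.1 / stabE T Λ d := by
  have h : erel T Λ (Quot.out (πE T Λ d)) d := (piE_eq_iff T Λ).1 (piE_out T Λ _)
  obtain ⟨γ, hγ, h1, h2⟩ := h
  unfold indQ
  rw [stabV_eq_of_vrel Λ ⟨γ, hγ, h1⟩, stabE_eq_of_erel T Λ ⟨γ, hγ, h1, h2⟩]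

end Aux2
section Aux3

variable (T : SimpleGraph V) (Λ : Subgroup (Equiv.Perm V))

noncomputable def stabEquiv (a : V) :
    {γ : Λ // (γ : Equiv.Perm V) a = a} ≃ MulAction.stabilizer Λ a :=
  Equiv.subtypeEquivRight fun γ => by
    rw [MulAction.mem_stabilizer_iff]
    exact Iff.rfl

lemma stabV_eq_card_stabilizer (a : V) :
    stabV Λ a = Nat.card (MulAction.stabilizer Λ a) :=
  Nat.card_congr (stabEquiv Λ a)

lemma indQ_eq_card_orbit
    (hFin : ∀ v : V, Finite {γ : Λ // (γ : Equiv.Perm V) v = v})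
    (a b : V) (hab : T.Adj a b) :
    indQ T Λ (πE T Λ ⟨(a, b), hab⟩) =
      Nat.card (MulAction.orbit (MulAction.stabilizer Λ a) b) := by
  haveI : Finite (MulAction.stabilizer Λ a) := Finite.of_equiv _ (stabEquiv Λ a)
  set G := MulAction.stabilizer Λ a with hG
  set H := MulAction.stabilizer G b with hH
  have hstabV : stabV Λ a = Nat.card G := stabV_eq_card_stabilizer Λ a
  have hstabE : stabE T Λ ⟨(a, b), hab⟩ = Nat.card H := by
    refine Nat.card_congr
      { toFun := fun γ => ⟨⟨γ.1, show γ.1 • a = a from γ.2.1⟩,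
          show (⟨γ.1, show γ.1 • a = a from γ.2.1⟩ : G) • b = b from γ.2.2⟩
        invFun := fun g => ⟨g.1.1, show ((g.1.1 : Λ) : Equiv.Perm V) a = a from g.1.2,
          show ((g.1.1 : Λ) : Equiv.Perm V) b = b from g.2⟩
        left_inv := fun _ => rfl
        right_inv := fun _ => rfl }
  have horb : Nat.card (MulAction.orbit G b) = H.index := by
    rw [Nat.card_congr (MulAction.orbitEquivQuotientStabilizer G b)]
    rfl
  rw [show indQ T Λ (πE T Λ ⟨(a, b), hab⟩) = stabV Λ a / stabE T Λ ⟨(a, b), hab⟩ from indQ_mk T Λ _, hstabV, hstabE, horb]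
  haveI : Nonempty H := ⟨1⟩
  have hpos : 0 < Nat.card H := Nat.card_pos
  rw [← H.index_mul_card]
  exact Nat.mul_div_cancel _ hpos

lemma indQ_pos
    (hFin : ∀ v : V, Finite {γ : Λ // (γ : Equiv.Perm V) v = v})
    (e : EQ T Λ) : 0 < indQ T Λ e := by
  have h : e = πE T Λ ⟨((Quot.out e).1.1, (Quot.out e).1.2), (Quot.out e).2⟩ :=
    (piE_out T Λ e).symm
  rw [h, indQ_eq_card_orbit T Λ hFin _ _ _]
  haveI : Finite (MulAction.stabilizer Λ (Quot.out e).1.1) :=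
    Finite.of_equiv _ (stabEquiv Λ _)
  haveI : Finite (MulAction.orbit (MulAction.stabilizer Λ (Quot.out e).1.1) (Quot.out e).1.2) :=
    Set.Finite.to_subtype (Set.finite_range _)
  haveI : Nonempty (MulAction.orbit (MulAction.stabilizer Λ (Quot.out e).1.1) (Quot.out e).1.2) :=
    ⟨⟨(Quot.out e).1.2, MulAction.mem_orbit_self _⟩⟩
  exact Nat.card_pos

end Aux3
section Aux4

variable (T : SimpleGraph V) (Λ : Subgroup (Equiv.Perm V))

/-- Map a neighbor of the chosen lift of `v` to a quotient edge with tail `v`. -/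
noncomputable def nbrToEdge (v : VQ Λ) (w : T.neighborSet (Quot.out v)) :
    {f : EQ T Λ // tailQ T Λ f = v} :=
  ⟨πE T Λ ⟨(Quot.out v, w.1), w.2⟩, by exact (tailQ_mk T Λ _).trans (piV_out Λ v)⟩

lemma nbrToEdge_surjective (hAut : ∀ γ ∈ Λ, IsTreeAut T γ) (v : VQ Λ) :
    Function.Surjective (nbrToEdge T Λ v) := by
  rintro ⟨f, hf⟩
  obtain ⟨γ, hγ, h1⟩ : vrel Λ (Quot.out f).1.1 (Quot.out v) := by
    rw [← piV_eq_iff Λ, piV_out Λ v]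
    exact hf
  have hadj : T.Adj (Quot.out v) (γ (Quot.out f).1.2) := by
    have h2 := (hAut γ hγ).1 (Quot.out f).1.1 (Quot.out f).1.2
    rw [h1] at h2
    exact h2.2 (Quot.out f).2
  refine ⟨⟨γ (Quot.out f).1.2, hadj⟩, Subtype.ext ?_⟩
  show πE T Λ ⟨(Quot.out v, γ (Quot.out f).1.2), hadj⟩ = f
  conv_rhs => rw [← piE_out T Λ f]
  exact ((piE_eq_iff T Λ).2 ⟨γ, hγ, h1, rfl⟩).symm

lemma card_fiber (hAut : ∀ γ ∈ Λ, IsTreeAut T γ)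
    (hFin : ∀ u : V, Finite {γ : Λ // (γ : Equiv.Perm V) u = u})
    (v : VQ Λ) (f : {f : EQ T Λ // tailQ T Λ f = v})
    (w₀ : T.neighborSet (Quot.out v)) (hw₀ : nbrToEdge T Λ v w₀ = f) :
    Nat.card {w : T.neighborSet (Quot.out v) // nbrToEdge T Λ v w = f} = indQ T Λ f.1 := by
  have hf1 : f.1 = πE T Λ ⟨(Quot.out v, w₀.1), w₀.2⟩ := by rw [← hw₀]; rfl
  rw [hf1]; refine Eq.trans ?_ (indQ_eq_card_orbit T Λ hFin (Quot.out v) w₀.1 w₀.2).symm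
  have key : ∀ w : T.neighborSet (Quot.out v), (nbrToEdge T Λ v w = f ↔
      w.1 ∈ MulAction.orbit (MulAction.stabilizer Λ (Quot.out v)) w₀.1) := by
    intro w
    rw [← hw₀, Subtype.ext_iff]
    show πE T Λ ⟨(Quot.out v, w.1), w.2⟩ = πE T Λ ⟨(Quot.out v, w₀.1), w₀.2⟩ ↔ _
    refine (piE_eq_iff T Λ).trans ?_; rw [MulAction.mem_orbit_iff]
    constructor
    · rintro ⟨γ, hγ, h1, h2⟩
      have h1' : γ (Quot.out v) = Quot.out v := h1
      have h2' : γ w.1 = w₀.1 := h2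
      refine ⟨⟨⟨γ, hγ⟩⁻¹, show ((⟨γ, hγ⟩⁻¹ : Λ) : Equiv.Perm V) (Quot.out v) = Quot.out v from ?_⟩, ?_⟩
      · show γ⁻¹ (Quot.out v) = Quot.out v
        conv_lhs => rw [← h1']
        exact γ.symm_apply_apply _
      · show γ⁻¹ w₀.1 = w.1
        rw [← h2']
        exact γ.symm_apply_apply _
    · rintro ⟨g, hg⟩
      have hmem : ((g : Λ) : Equiv.Perm V) (Quot.out v) = Quot.out v := g.2
      refine ⟨((g : Λ) : Equiv.Perm V)⁻¹, Λ.inv_mem (g : Λ).2, ?_, ?_⟩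
      · show ((g : Λ) : Equiv.Perm V)⁻¹ (Quot.out v) = Quot.out v
        have h3 := congrArg (⇑(((g : Λ) : Equiv.Perm V)⁻¹)) hmem
        rw [show ∀ x, ((g : Λ) : Equiv.Perm V)⁻¹ (((g : Λ) : Equiv.Perm V) x) = x from fun x => Equiv.symm_apply_apply _ x] at h3
        exact h3.symm
      · show ((g : Λ) : Equiv.Perm V)⁻¹ w.1 = w₀.1
        have hg' : ((g : Λ) : Equiv.Perm V) w₀.1 = w.1 := hg
        rw [← hg']
        exact Equiv.symm_apply_apply _ _
  have adj_orbit : ∀ y ∈ MulAction.orbit (MulAction.stabilizer Λ (Quot.out v)) w₀.1, T.Adj (Quot.out v) y := by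
    rintro y ⟨g, rfl⟩
    have h1 : ((g : Λ) : Equiv.Perm V) (Quot.out v) = Quot.out v := g.2
    have h2 := (hAut _ (g : Λ).2).1 (Quot.out v) w₀.1
    rw [h1] at h2
    exact h2.2 w₀.2
  exact Nat.card_congr
    { toFun := fun x => ⟨x.1.1, (key x.1).1 x.2⟩
      invFun := fun y => ⟨⟨y.1, adj_orbit y.1 y.2⟩, (key _).2 y.2⟩
      left_inv := fun x => Subtype.ext (Subtype.ext rfl)
      right_inv := fun y => rfl }

lemma sum_indQ_tail (hAut : ∀ γ ∈ Λ, IsTreeAut T γ)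
    (hFin : ∀ u : V, Finite {γ : Λ // (γ : Equiv.Perm V) u = u})
    (v : VQ Λ) (hnbr : Finite (T.neighborSet (Quot.out v))) :
    ∑' f : {f : EQ T Λ // tailQ T Λ f = v}, (indQ T Λ f.1 : ℝ) = (degQ T Λ v : ℝ) := by
  haveI := hnbr
  have hsurj := nbrToEdge_surjective T Λ hAut v
  haveI hfin : Finite {f : EQ T Λ // tailQ T Λ f = v} := Finite.of_surjective _ hsurj
  haveI := Fintype.ofFinite {f : EQ T Λ // tailQ T Λ f = v}
  haveI := Fintype.ofFinite (T.neighborSet (Quot.out v) : Set V)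
  haveI : ∀ f : {f : EQ T Λ // tailQ T Λ f = v},
      Fintype {w // nbrToEdge T Λ v w = f} := fun f => Fintype.ofFinite _
  rw [tsum_fintype, ← Nat.cast_sum]
  rw [show degQ T Λ v = Nat.card (T.neighborSet (Quot.out v)) from rfl]
  rw [Nat.cast_inj]
  have hsum : ∀ f : {f : EQ T Λ // tailQ T Λ f = v},
      indQ T Λ f.1 = Nat.card {w // nbrToEdge T Λ v w = f} := by
    intro f
    obtain ⟨w₀, hw₀⟩ := hsurj f
    exact (card_fiber T Λ hAut hFin v f w₀ hw₀).symm
  rw [Finset.sum_congr rfl fun f _ => hsum f]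
  rw [← Nat.card_congr (Equiv.sigmaFiberEquiv (nbrToEdge T Λ v))]
  rw [Nat.card_eq_fintype_card, Fintype.card_sigma]
  exact Finset.sum_congr rfl fun f _ => Nat.card_eq_fintype_card

lemma tail_fiber_finite (hAut : ∀ γ ∈ Λ, IsTreeAut T γ) (v : VQ Λ)
    (hnbr : Finite (T.neighborSet (Quot.out v))) :
    Finite {f : EQ T Λ // tailQ T Λ f = v} :=
  Finite.of_surjective _ (nbrToEdge_surjective T Λ hAut v)

/-- Reversal gives a bijection between head-fibers and tail-fibers. -/
noncomputable def headTailEquiv (v : VQ Λ) :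
    {e : EQ T Λ // headQ T Λ e = v} ≃ {f : EQ T Λ // tailQ T Λ f = v} where
  toFun e := ⟨barQ T Λ e.1, by rw [tailQ_barQ]; exact e.2⟩
  invFun f := ⟨barQ T Λ f.1, by rw [headQ_barQ]; exact f.2⟩
  left_inv e := Subtype.ext (barQ_barQ T Λ e.1)
  right_inv f := Subtype.ext (barQ_barQ T Λ f.1)

end Aux4
/-- Proposition 6.3. The Markov chain associated to any tree lattice
is positive recurrent: it admits a stationary probability measure. -/
theorem markov_chain_positive_recurrent {V : Type*} (T : SimpleGraph V)
    (d₁ d₂ : ℕ) (hd₁ : 3 ≤ d₁) (hd₂ : 3 ≤ d₂) (hT : IsBiregularTree T d₁ d₂)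
    (Λ : Subgroup (Equiv.Perm V)) (hΛ : IsTreeLattice T Λ) :
    ∃ μ : EQ T Λ → ℝ, (∀ e, 0 ≤ μ e) ∧ (∑' e : EQ T Λ, μ e) = 1 ∧
      ∀ f : EQ T Λ, (∑' e : EQ T Λ, μ e * kerP T Λ e f) = μ f := by
  obtain ⟨hconn, hacyc, c, hc, hc1, hc2⟩ := hT
  obtain ⟨hAut, hFin, o, N, hNo, hNpos, hNrel, hNsum⟩ := hΛ
  -- degree facts
  have hdeg12 : ∀ v : VQ Λ, degQ T Λ v = d₁ ∨ degQ T Λ v = d₂ := by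
    intro v
    rcases Bool.eq_false_or_eq_true (c (Quot.out v)) with h | h
    · exact Or.inl (hc1 _ h)
    · exact Or.inr (hc2 _ h)
  have hdeg3 : ∀ v : VQ Λ, 3 ≤ degQ T Λ v := by
    intro v; rcases hdeg12 v with h | h <;> omega
  have hdegD : ∀ v : VQ Λ, degQ T Λ v ≤ max d₁ d₂ := by
    intro v
    rcases hdeg12 v with h | h <;> rw [h]
    · exact le_max_left _ _
    · exact le_max_right _ _
  have hnbr : ∀ v : VQ Λ, Finite (T.neighborSet (Quot.out v)) := by
    intro v
    have h1 : 0 < Nat.card (T.neighborSet (Quot.out v)) := by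
      have := hdeg3 v; rw [degQ] at this; omega
    exact (Nat.card_pos_iff.mp h1).2
  have hNne : ∀ v, N v ≠ 0 := fun v => (hNpos v).ne'
  have hind : ∀ e : EQ T Λ, (0 : ℝ) < (indQ T Λ e : ℝ) := by
    intro e; exact_mod_cast indQ_pos T Λ hFin e
  set ν : EQ T Λ → ℝ := fun e => (indQ T Λ e : ℝ) / N (tailQ T Λ e) with hν
  have hν0 : ∀ e, 0 ≤ ν e := fun e => div_nonneg (by positivity) (hNpos _).le
  have hνpos : ∀ e, 0 < ν e := fun e => div_pos (hind e) (hNpos _)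
  have hν_alt : ∀ e, ν e = (indQ T Λ (barQ T Λ e) : ℝ) / N (headQ T Λ e) := by
    intro e
    have h := hNrel e
    rw [deltaQ] at h
    rw [hν, h]
    have h1 := (hind e).ne'
    have h2 := (hind (barQ T Λ e)).ne'
    have h3 := hNne (tailQ T Λ e)
    field_simp
  -- fiberwise sums
  have hfin_tail : ∀ v : VQ Λ, Finite {f : EQ T Λ // tailQ T Λ f = v} :=
    fun v => tail_fiber_finite T Λ hAut v (hnbr v)
  have hsum_fiber : ∀ v : VQ Λ,
      ∑' f : {f : EQ T Λ // tailQ T Λ f = v}, ν f.1 = (degQ T Λ v : ℝ) / N v := by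
    intro v
    have h1 : ∀ f : {f : EQ T Λ // tailQ T Λ f = v}, ν f.1 = (indQ T Λ f.1 : ℝ) / N v := by
      intro f; rw [hν]; simp only; rw [f.2]
    rw [tsum_congr h1, tsum_div_const, sum_indQ_tail T Λ hAut hFin v (hnbr v)]
  -- summability
  have hsummable : Summable ν := by
    have hF : Summable (fun x : Σ v : VQ Λ, {g : EQ T Λ // tailQ T Λ g = v} => ν x.2.1) := by
      rw [summable_sigma_of_nonneg (fun x => hν0 _)]
      refine ⟨fun v => ?_, ?_⟩
      · haveI := hfin_tail v
        exact Summable.of_finite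
      · refine (summable_congr hsum_fiber).mpr ?_
        refine Summable.of_nonneg_of_le
          (fun v => div_nonneg (by positivity) (hNpos v).le) (fun v => ?_)
          (hNsum.mul_left ((max d₁ d₂ : ℕ) : ℝ))
        rw [div_eq_mul_inv]
        refine mul_le_mul_of_nonneg_right ?_ (inv_nonneg.mpr (hNpos v).le)
        exact_mod_cast hdegD v
    exact (Equiv.summable_iff (Equiv.sigmaFiberEquiv (tailQ T Λ))).mp hF
  -- total mass is positive
  have hne : Nonempty (T.neighborSet (Quot.out o)) := by
    have h3 := hdeg3 o
    have h1 : 0 < Nat.card (T.neighborSet (Quot.out o)) := by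
      rw [degQ] at h3; omega
    exact (Nat.card_pos_iff.mp h1).1
  obtain ⟨b⟩ := hne
  have hS : 0 < ∑' e, ν e :=
    lt_of_lt_of_le (hνpos (nbrToEdge T Λ o b).1)
      (Summable.le_tsum hsummable _ fun j _ => hν0 j)
  set S : ℝ := ∑' e, ν e with hSdef
  -- the key stationarity identity for ν
  have hkey : ∀ f : EQ T Λ, (∑' e : EQ T Λ, ν e * kerP T Λ e f) = ν f := by
    intro f
    haveI := hfin_tail (tailQ T Λ f)
    haveI : Finite {e : EQ T Λ // headQ T Λ e = tailQ T Λ f} :=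
      Finite.of_equiv _ (headTailEquiv T Λ (tailQ T Λ f)).symm
    haveI := Fintype.ofFinite {e : EQ T Λ // headQ T Λ e = tailQ T Λ f}
    haveI := Fintype.ofFinite {g : EQ T Λ // tailQ T Λ g = tailQ T Λ f}
    have dv3 : (3 : ℝ) ≤ (degQ T Λ (tailQ T Λ f) : ℝ) := by exact_mod_cast hdeg3 _
    have hd0 : (0 : ℝ) < (degQ T Λ (tailQ T Λ f) : ℝ) - 1 := by linarith
    set s : Finset (EQ T Λ) :=
      Finset.univ.map (Function.Embedding.subtype (fun e => headQ T Λ e = tailQ T Λ f))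
      with hs
    have hmem : ∀ e : EQ T Λ, e ∈ s ↔ headQ T Λ e = tailQ T Λ f := by
      intro e
      simp [hs]
    have hvanish : ∀ e ∉ s, ν e * kerP T Λ e f = 0 := by
      intro e he
      have he' : ¬ headQ T Λ e = tailQ T Λ f := fun h => he ((hmem e).2 h)
      rw [kerP, if_neg he', mul_zero]
    rw [tsum_eq_sum hvanish, hs, Finset.sum_map]
    simp only [Function.Embedding.coe_subtype]
    have hpt : ∀ x : {e : EQ T Λ // headQ T Λ e = tailQ T Λ f},
        ν x.1 * kerP T Λ x.1 f =
        (indQ T Λ ((headTailEquiv T Λ (tailQ T Λ f) x).1) : ℝ) / N (tailQ T Λ f) *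
          ((if f = (headTailEquiv T Λ (tailQ T Λ f) x).1 then (indQ T Λ f : ℝ) - 1
            else (indQ T Λ f : ℝ)) / ((degQ T Λ (tailQ T Λ f) : ℝ) - 1)) := by
      intro x
      have hx : headQ T Λ x.1 = tailQ T Λ f := x.2
      show ν x.1 * kerP T Λ x.1 f =
        (indQ T Λ (barQ T Λ x.1) : ℝ) / N (tailQ T Λ f) *
          ((if f = barQ T Λ x.1 then (indQ T Λ f : ℝ) - 1 else (indQ T Λ f : ℝ)) /
            ((degQ T Λ (tailQ T Λ f) : ℝ) - 1))
      rw [kerP, if_pos hx, hx, hν_alt x.1, hx]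
    have hre := Fintype.sum_equiv (headTailEquiv T Λ (tailQ T Λ f))
      (fun x : {e : EQ T Λ // headQ T Λ e = tailQ T Λ f} => ν x.1 * kerP T Λ x.1 f)
      (fun y : {g : EQ T Λ // tailQ T Λ g = tailQ T Λ f} =>
        (indQ T Λ y.1 : ℝ) / N (tailQ T Λ f) *
          ((if f = y.1 then (indQ T Λ f : ℝ) - 1 else (indQ T Λ f : ℝ)) /
            ((degQ T Λ (tailQ T Λ f) : ℝ) - 1))) hpt
    rw [hre]
    have hstep : ∀ y : {g : EQ T Λ // tailQ T Λ g = tailQ T Λ f},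
        (indQ T Λ y.1 : ℝ) / N (tailQ T Λ f) *
          ((if f = y.1 then (indQ T Λ f : ℝ) - 1 else (indQ T Λ f : ℝ)) /
            ((degQ T Λ (tailQ T Λ f) : ℝ) - 1)) =
        ((indQ T Λ y.1 : ℝ) * (indQ T Λ f : ℝ) -
            (if y = (⟨f, rfl⟩ : {g : EQ T Λ // tailQ T Λ g = tailQ T Λ f}) then
              (indQ T Λ f : ℝ) else 0)) /
          (N (tailQ T Λ f) * ((degQ T Λ (tailQ T Λ f) : ℝ) - 1)) := by
      intro y
      rw [div_mul_div_comm]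
      congr 1
      by_cases hy : f = y.1
      · rw [if_pos hy, if_pos (Subtype.ext hy.symm), ← hy]
        ring
      · rw [if_neg hy, if_neg (fun h => hy (by rw [h]))]
        ring
    rw [Finset.sum_congr rfl fun y _ => hstep y]
    rw [← Finset.sum_div, Finset.sum_sub_distrib, ← Finset.sum_mul]
    have hdsum : (∑ y : {g : EQ T Λ // tailQ T Λ g = tailQ T Λ f}, (indQ T Λ y.1 : ℝ)) =
        (degQ T Λ (tailQ T Λ f) : ℝ) := by
      have h2 := sum_indQ_tail T Λ hAut hFin (tailQ T Λ f) (hnbr _)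
      rwa [tsum_fintype] at h2
    rw [hdsum, Finset.sum_ite_eq' Finset.univ
      (⟨f, rfl⟩ : {g : EQ T Λ // tailQ T Λ g = tailQ T Λ f}) (fun _ => (indQ T Λ f : ℝ)),
      if_pos (Finset.mem_univ _)]
    have hνf : ν f = (indQ T Λ f : ℝ) / N (tailQ T Λ f) := rfl
    rw [hνf]
    have h3 := hNne (tailQ T Λ f)
    have h4 := hd0.ne'
    field_simp
  -- assemble the stationary probability measure
  refine ⟨fun e => ν e / S, fun e => div_nonneg (hν0 e) hS.le, ?_, ?_⟩
  · rw [tsum_div_const, ← hSdef, div_self hS.ne']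
  · intro f
    have h1 : ∀ e, ν e / S * kerP T Λ e f = ν e * kerP T Λ e f / S := fun e => by ring
    rw [tsum_congr h1, tsum_div_const, hkey f]
end TreeDyn
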